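/- For any divisor D on a smooth projective curve and any sequence of divisors A_0, ..., A_n with A_i = A_{i-1} + P_i (P_i rational points), deg D >= |{i : A_i ∈ Γ_{P_i} and A_i - D ∉ Γ_{P_i}}| - |{i : A_i ∉ Γ_{P_i} and A_i - D ∈ Γ_{P_i}}|, provided D is effective. -/

import Mathlib

noncomputable section

/-- Degree of a divisor, where divisors on the curve are modeled as finitely
supported integer valued functions on the set of rational points. -/
def degr {Point : Type*} (D : Point →₀ ℤ) : ℤ := D.sum fun _ n => n

/-- An abstract model of a smooth projective absolutely irreducible curve over a field,
recording the data used in the paper: the dimension `l D` of the Riemann-Roch space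
`L(D)`, the genus `g`, a canonical divisor `K`, and linear equivalence `lin`,
together with their basic properties (Riemann-Roch, monotonicity, semigroup
properties of nongaps, etc.). -/
structure Curve (Point : Type*) where
  /-- `l D = dim L(D)` -/
  l : (Point →₀ ℤ) → ℕ
  /-- the genus -/
  g : ℕ
  /-- a canonical divisor -/
  K : Point →₀ ℤ
  /-- linear equivalence of divisors -/
  lin : (Point →₀ ℤ) → (Point →₀ ℤ) → Prop
  lin_refl : ∀ A, lin A A
  lin_symm : ∀ {A B}, lin A B → lin B A
  lin_trans : ∀ {A B C}, lin A B → lin B C → lin A C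
  lin_add : ∀ {A B} (E : Point →₀ ℤ), lin A B → lin (A + E) (B + E)
  deg_lin : ∀ {A B}, lin A B → degr A = degr B
  l_lin : ∀ {A B}, lin A B → l A = l B
  l_zero : l 0 = 1
  l_neg : ∀ {D}, degr D < 0 → l D = 0
  l_mono : ∀ (D : Point →₀ ℤ) (P : Point), l D ≤ l (D + Finsupp.single P 1)
  l_step : ∀ (D : Point →₀ ℤ) (P : Point), l (D + Finsupp.single P 1) ≤ l D + 1
  /-- Riemann-Roch -/
  rr : ∀ D : Point →₀ ℤ, (l D : ℤ) - l (K - D) = degr D + 1 - g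
  lin_of_deg_zero : ∀ {D}, l D ≠ 0 → degr D = 0 → lin D 0
  /-- the semigroup property of `Γ_P` -/
  gamma_add : ∀ (P : Point) {A B}, l A ≠ l (A - Finsupp.single P 1) →
      l B ≠ l (B - Finsupp.single P 1) → l (A + B) ≠ l (A + B - Finsupp.single P 1)
  eff_add : ∀ {A B}, l A ≠ 0 → l B ≠ 0 → l (A + B) ≠ 0
  point_nongap : ∀ {P Q : Point}, P ≠ Q →
      l (Finsupp.single P 1) ≠ l (Finsupp.single P 1 - Finsupp.single Q 1)

variable {Point : Type*}

/-- `Γ_P` : divisor (classes) with no base point at `P`, i.e. `L(A) ≠ L(A-P)`. -/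
def GammaP (X : Curve Point) (P : Point) : Set (Point →₀ ℤ) :=
  {A | X.l A ≠ X.l (A - Finsupp.single P 1)}

/-- `Γ_S = ∩_{P ∈ S} Γ_P`, with the convention `Γ_∅ = Γ = {A : L(A) ≠ 0}`. -/
def GammaS (X : Curve Point) (S : Finset Point) : Set (Point →₀ ℤ) :=
  {A | (S = ∅ → X.l A ≠ 0) ∧ ∀ P ∈ S, A ∈ GammaP X P}

/-- `Γ(C; S, S') = {A : A ∈ Γ_S and A - C ∈ Γ_{S'}}`. -/
def GammaSet (X : Curve Point) (C : Point →₀ ℤ) (S S' : Finset Point) :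
    Set (Point →₀ ℤ) :=
  {A | A ∈ GammaS X S ∧ A - C ∈ GammaS X S'}

/-- `γ(C; S, S') = min {deg A : A ∈ Γ(C; S, S')}`. -/
def gammaMin (X : Curve Point) (C : Point →₀ ℤ) (S S' : Finset Point) : ℤ :=
  sInf (degr '' GammaSet X C S S')

/-- `Δ = {i : A_i ∈ Γ_{P_i} and A_i - C ∉ Γ_{P_i}}` for indices `1 ≤ i ≤ n`. -/
def Delta (X : Curve Point) (C : Point →₀ ℤ) (n : ℕ) (A : ℕ → Point →₀ ℤ)
    (P : ℕ → Point) : Set ℕ :=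
  {i | 1 ≤ i ∧ i ≤ n ∧ A i ∈ GammaP X (P i) ∧ A i - C ∉ GammaP X (P i)}

/-- `Δ' = {i : A_i ∉ Γ_{P_i} and A_i - C ∈ Γ_{P_i}}` for indices `1 ≤ i ≤ n`. -/
def Delta' (X : Curve Point) (C : Point →₀ ℤ) (n : ℕ) (A : ℕ → Point →₀ ℤ)
    (P : ℕ → Point) : Set ℕ :=
  {i | 1 ≤ i ∧ i ≤ n ∧ A i ∉ GammaP X (P i) ∧ A i - C ∈ GammaP X (P i)}

lemma degr_add (A B : Point →₀ ℤ) : degr (A + B) = degr A + degr B := by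
  simpa [degr] using Finsupp.sum_add_index' (by simp) (fun _ _ _ => rfl)

lemma degr_single (P : Point) : degr (Finsupp.single P 1) = 1 := by
  simp [degr]

/-- For effective `E`, `l A ≤ l (A + E) ≤ l A + deg E`. -/
lemma l_add_eff (X : Curve Point) : ∀ m : ℕ, ∀ E : Point →₀ ℤ, 0 ≤ E →
    degr E = (m : ℤ) → ∀ A, X.l A ≤ X.l (A + E) ∧ (X.l (A + E) : ℤ) ≤ X.l A + m := by
  intro m
  induction m with
  | zero =>
    intro E hE hdeg A
    have : E = 0 := by
      ext p
      have h1 : 0 ≤ E p := hE p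
      by_contra h
      have hlt : 0 < E p := lt_of_le_of_ne h1 (Ne.symm h)
      have hsub : p ∈ E.support := Finsupp.mem_support_iff.mpr (by omega)
      have : (0 : ℤ) < degr E := by
        have := Finset.sum_lt_sum_of_nonempty ⟨p, hsub⟩
          (f := fun _ : Point => (0:ℤ)) (g := fun q => E q) ?_
        · simpa [degr, Finsupp.sum] using this
        · intro q hq
          exact lt_of_le_of_ne (hE q) (Ne.symm (Finsupp.mem_support_iff.mp hq))
      omega
    subst this; simp
  | succ k ih =>
    intro E hE hdeg A
    have hne : E ≠ 0 := by
      intro h; subst h; simp [degr] at hdeg; omega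
    obtain ⟨p, hp⟩ := Finsupp.support_nonempty_iff.mpr hne
    have hp1 : 1 ≤ E p :=
      lt_of_le_of_ne (hE p) (Ne.symm (Finsupp.mem_support_iff.mp hp))
    set E' := E - Finsupp.single p 1 with hE'
    have hE'0 : 0 ≤ E' := by
      intro q
      have h0 : (0 : Point →₀ ℤ) q ≤ E q := hE q
      simp only [Finsupp.coe_zero, Pi.zero_apply] at h0 ⊢
      simp only [hE', Finsupp.sub_apply]
      by_cases hq : q = p
      · subst hq; rw [Finsupp.single_eq_same]; omega
      · rw [Finsupp.single_eq_of_ne' (Ne.symm hq)]; omega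
    have hEeq : E = E' + Finsupp.single p 1 := by simp [hE']
    have hdeg' : degr E' = (k : ℤ) := by
      have := degr_add E' (Finsupp.single p 1)
      rw [← hEeq, degr_single] at this
      omega
    have h1 := ih E' hE'0 hdeg' A
    have h2 := X.l_mono (A + E') p
    have h3 := X.l_step (A + E') p
    rw [hEeq, ← add_assoc]
    constructor
    · exact le_trans h1.1 h2
    · push_cast
      have := h1.2
      omega

lemma tele_sum (f : ℕ → ℤ) (n : ℕ) :
    ∑ i ∈ Finset.Icc 1 n, (f i - f (i - 1)) = f n - f 0 := by
  induction n with
  | zero => simp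
  | succ k ih =>
    rw [Finset.sum_Icc_succ_top (by omega : 1 ≤ k + 1), ih]
    simp

/-- For any effective divisor `D` and any sequence of divisors `A_0, ..., A_n` with
`A_i = A_{i-1} + P_i` (`P_i` rational points),
`deg D ≥ |{i : A_i ∈ Γ_{P_i} and A_i - D ∉ Γ_{P_i}}| - |{i : A_i ∉ Γ_{P_i} and A_i - D ∈ Γ_{P_i}}|`. -/
theorem deg_ge_delta_diff (X : Curve Point) (D : Point →₀ ℤ) (hD : 0 ≤ D)
    (n : ℕ) (A : ℕ → Point →₀ ℤ) (P : ℕ → Point)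
    (hA : ∀ i, 1 ≤ i → i ≤ n → A i = A (i - 1) + Finsupp.single (P i) 1) :
    ((Delta X D n A P).ncard : ℤ) - ((Delta' X D n A P).ncard : ℤ) ≤ degr D := by
  classical
  set f : ℕ → ℤ := fun i => (X.l (A i) : ℤ) - X.l (A i - D) with hf
  have hdeg0 : 0 ≤ degr D := Finset.sum_nonneg fun q _ => hD q
  set m := (degr D).toNat with hm
  have hdm : degr D = (m : ℤ) := by omega
  set pΔ : ℕ → Prop := fun i => A i ∈ GammaP X (P i) ∧ A i - D ∉ GammaP X (P i)
    with hpΔ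
  set pΔ' : ℕ → Prop := fun i => A i ∉ GammaP X (P i) ∧ A i - D ∈ GammaP X (P i)
    with hpΔ'
  have key : ∀ i ∈ Finset.Icc 1 n,
      f i - f (i - 1) = (if pΔ i then (1:ℤ) else 0) - (if pΔ' i then (1:ℤ) else 0) := by
    intro i hi
    rw [Finset.mem_Icc] at hi
    obtain ⟨h1, h2⟩ := hi
    have hAi := hA i h1 h2
    have e1 : A i - Finsupp.single (P i) 1 = A (i - 1) := by rw [hAi]; abel
    have e2 : A i - D - Finsupp.single (P i) 1 = A (i - 1) - D := by rw [hAi]; abel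
    have e3 : A i - D = (A (i - 1) - D) + Finsupp.single (P i) 1 := by rw [hAi]; abel
    have s1 : X.l (A (i - 1)) ≤ X.l (A i) := by rw [hAi]; exact X.l_mono _ _
    have s2 : X.l (A i) ≤ X.l (A (i - 1)) + 1 := by rw [hAi]; exact X.l_step _ _
    have s3 : X.l (A (i - 1) - D) ≤ X.l (A i - D) := by rw [e3]; exact X.l_mono _ _
    have s4 : X.l (A i - D) ≤ X.l (A (i - 1) - D) + 1 := by rw [e3]; exact X.l_step _ _
    have hm1 : pΔ i ↔
        (X.l (A i) ≠ X.l (A (i - 1)) ∧ ¬ X.l (A i - D) ≠ X.l (A (i - 1) - D)) := by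
      simp [hpΔ, GammaP, e1, e2]
    have hm2 : pΔ' i ↔
        (¬ X.l (A i) ≠ X.l (A (i - 1)) ∧ X.l (A i - D) ≠ X.l (A (i - 1) - D)) := by
      simp [hpΔ', GammaP, e1, e2]
    simp only [hf]
    split_ifs with hd hd' hd'
    · rw [hm1] at hd; rw [hm2] at hd'; omega
    · rw [hm1] at hd; omega
    · rw [hm1] at hd; rw [hm2] at hd'; omega
    · rw [hm1] at hd; rw [hm2] at hd'; omega
  have n1 : (Delta X D n A P).ncard = ((Finset.Icc 1 n).filter pΔ).card := by
    rw [← Set.ncard_coe_finset]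
    congr 1
    ext i
    simp only [Finset.coe_filter, Set.mem_setOf_eq, Finset.mem_Icc, Delta, hpΔ]
    tauto
  have n2 : (Delta' X D n A P).ncard = ((Finset.Icc 1 n).filter pΔ').card := by
    rw [← Set.ncard_coe_finset]
    congr 1
    ext i
    simp only [Finset.coe_filter, Set.mem_setOf_eq, Finset.mem_Icc, Delta', hpΔ']
    tauto
  have hcount : ((Delta X D n A P).ncard : ℤ) - ((Delta' X D n A P).ncard : ℤ)
      = ∑ i ∈ Finset.Icc 1 n, ((if pΔ i then (1:ℤ) else 0)
        - (if pΔ' i then (1:ℤ) else 0)) := by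
    rw [Finset.sum_sub_distrib, Finset.sum_boole, Finset.sum_boole, n1, n2]
  rw [hcount, ← Finset.sum_congr rfl key, tele_sum f n]
  have hb1 : (X.l (A n) : ℤ) ≤ X.l (A n - D) + m := by
    have := (l_add_eff X m D hD hdm (A n - D)).2
    simpa using this
  have hb2 : X.l (A 0 - D) ≤ X.l (A 0) := by
    have := (l_add_eff X m D hD hdm (A 0 - D)).1
    simpa using this
  simp only [hf]
  omega
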